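/- Let p be a prime, let n, m ≥ 1 be integers, let φ₁, …, φ_m ∈ ℤ[x₁, …, x_n] be polynomials with integer coefficients, and let Φ : ℤ_p^n → ℤ_p^m be the induced polynomial map. Let μ_n and μ_m denote the Haar probability measures on ℤ_p^n and ℤ_p^m respectively. Suppose there is a constant C > 0 such that for every integer k ≥ 1 and every y ∈ (ℤ/p^kℤ)^m, one has #{x ∈ (ℤ/p^kℤ)^n : φ̄(x) = y} ≤ C · p^{k·(n−m)}, where φ̄ : (ℤ/p^kℤ)^n → (ℤ/p^kℤ)^m is the map induced by the polynomials reduced modulo p^k. Then the pushforward measure Measure.map Φ μ_n is at most C · μ_m, i.e. (Measure.map Φ μ_n)(A) ≤ C · μ_m(A) for every Borel set A ⊆ ℤ_p^m; in particular Measure.map Φ μ_n has density bounded by C with respect to μ_m. -/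

import Mathlib

open MeasureTheory ENNReal

/-- The Borel σ-algebra on the `p`-adic integers. -/
noncomputable instance (p : ℕ) [Fact p.Prime] : MeasurableSpace (PadicInt p) := borel _

instance (p : ℕ) [Fact p.Prime] : BorelSpace (PadicInt p) := ⟨rfl⟩

namespace Stmt10Aux
variable {p : ℕ} [Fact p.Prime]

noncomputable def red (k r : ℕ) (z : Fin r → PadicInt p) : Fin r → ZMod (p ^ k) :=
  fun j => PadicInt.toZModPow k (z j)

lemma red_surjective (k r : ℕ) : Function.Surjective (red (p := p) k r) := by
  intro y
  choose c hc using fun j => ZMod.intCast_surjective (y j)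
  exact ⟨fun j => (c j : PadicInt p), funext fun j => by simp [red, ← hc j]⟩

lemma red_add (k r : ℕ) (a b : Fin r → PadicInt p) :
    red (p := p) k r (a + b) = red k r a + red k r b := by
  funext j; simp [red]

lemma red_neg (k r : ℕ) (a : Fin r → PadicInt p) :
    red (p := p) k r (-a) = - red k r a := by
  funext j; simp [red]

lemma mem_fiber_iff_norm (k : ℕ) (a : PadicInt p) :
    PadicInt.toZModPow k a = 0 ↔ ‖a‖ ≤ (p : ℝ) ^ (-(k : ℤ)) := by
  rw [PadicInt.norm_le_pow_iff_mem_span_pow, ← PadicInt.ker_toZModPow, RingHom.mem_ker]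

lemma measurable_fiber0 (k r : ℕ) :
    MeasurableSet (red (p := p) k r ⁻¹' {0}) := by
  have : red (p := p) k r ⁻¹' {0} =
      Set.univ.pi (fun _ : Fin r => Metric.closedBall (0 : PadicInt p) ((p : ℝ) ^ (-(k : ℤ)))) := by
    ext z
    simp only [Set.mem_preimage, Set.mem_singleton_iff, funext_iff, Set.mem_pi, Set.mem_univ,
      forall_true_left, Metric.mem_closedBall, dist_zero_right]
    exact forall_congr' fun j => by rw [red]; exact mem_fiber_iff_norm k (z j)
  rw [this]
  exact MeasurableSet.univ_pi fun j => measurableSet_closedBall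

lemma fiber_eq_translate (k r : ℕ) (c : Fin r → PadicInt p) :
    red (p := p) k r ⁻¹' {red k r c} = (fun z => -c + z) ⁻¹' (red (p := p) k r ⁻¹' {0}) := by
  ext z
  simp only [Set.mem_preimage, Set.mem_singleton_iff]
  rw [red_add, red_neg]
  constructor
  · intro h; rw [h]; abel
  · intro h
    have := congrArg (fun t => red (p := p) k r c + t) h
    simp only [← red_add, ← add_assoc, add_neg_cancel, zero_add, add_zero] at this
    exact this

lemma measurable_fiber (k r : ℕ) (y : Fin r → ZMod (p ^ k)) :
    MeasurableSet (red (p := p) k r ⁻¹' {y}) := by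
  obtain ⟨c, rfl⟩ := red_surjective (p := p) k r y
  rw [fiber_eq_translate]
  exact (measurable_fiber0 k r).preimage (measurable_const_add _)


lemma card_target (k r : ℕ) : Fintype.card (Fin r → ZMod (p ^ k)) = p ^ (k * r) := by
  have : NeZero (p ^ k) := ⟨pow_ne_zero k (Fact.out : p.Prime).ne_zero⟩
  simp [Fintype.card_fun, ZMod.card, pow_mul]

lemma measure_fiber (k r : ℕ) (μ : Measure (Fin r → PadicInt p)) [μ.IsAddHaarMeasure]
    [IsProbabilityMeasure μ] (y : Fin r → ZMod (p ^ k)) :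
    μ (red (p := p) k r ⁻¹' {y}) = ((p ^ (k * r) : ℕ) : ℝ≥0∞)⁻¹ := by
  classical
  -- all fibers have the same measure
  have key : ∀ y : Fin r → ZMod (p ^ k),
      μ (red (p := p) k r ⁻¹' {y}) = μ (red (p := p) k r ⁻¹' {0}) := by
    intro y
    obtain ⟨c, rfl⟩ := red_surjective (p := p) k r y
    rw [fiber_eq_translate]
    exact measure_preimage_add μ (-c) _
  have hpart : (Set.univ : Set (Fin r → PadicInt p)) =
      ⋃ y : Fin r → ZMod (p ^ k), red (p := p) k r ⁻¹' {y} := by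
    ext z; simp only [Set.mem_univ, Set.mem_iUnion, Set.mem_preimage, Set.mem_singleton_iff,
      true_iff]
    exact ⟨red k r z, rfl⟩
  have hdisj : Pairwise (Function.onFun Disjoint
      fun y : Fin r → ZMod (p ^ k) => red (p := p) k r ⁻¹' {y}) := by
    intro a b hab
    refine Set.disjoint_left.2 fun z hza hzb => hab ?_
    simp only [Set.mem_preimage, Set.mem_singleton_iff] at hza hzb
    rw [← hza, ← hzb]
  have hsum := measure_iUnion hdisj (fun y => measurable_fiber k r y) (μ := μ)
  rw [← hpart, measure_univ] at hsum
  rw [tsum_fintype] at hsum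
  simp only [key] at hsum
  rw [Finset.sum_const, Finset.card_univ, card_target, nsmul_eq_mul] at hsum
  have hne : ((p ^ (k * r) : ℕ) : ℝ≥0∞) ≠ 0 := by
    exact_mod_cast Nat.cast_ne_zero.2 (pow_ne_zero _ (Fact.out : p.Prime).ne_zero)
  have htop : ((p ^ (k * r) : ℕ) : ℝ≥0∞) ≠ ⊤ := natCast_ne_top _
  rw [key y]
  rw [← one_mul (μ _), ← ENNReal.inv_mul_cancel hne htop, mul_assoc, ← hsum, mul_one]

lemma measure_preimage_set (k r : ℕ) (μ : Measure (Fin r → PadicInt p)) [μ.IsAddHaarMeasure]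
    [IsProbabilityMeasure μ] (T : Set (Fin r → ZMod (p ^ k))) :
    μ (red (p := p) k r ⁻¹' T) = (Nat.card T) * ((p ^ (k * r) : ℕ) : ℝ≥0∞)⁻¹ := by
  classical
  have hT : red (p := p) k r ⁻¹' T = ⋃ y ∈ T.toFinset, red (p := p) k r ⁻¹' {y} := by
    ext z; simp
  rw [hT, measure_biUnion_finset ?_ (fun y _ => measurable_fiber k r y)]
  · simp only [measure_fiber k r μ, Finset.sum_const, nsmul_eq_mul]
    congr 1
    rw [Nat.card_eq_card_toFinset]
  · intro a _ b _ hab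
    refine Set.disjoint_left.2 fun z hza hzb => hab ?_
    simp only [Set.mem_preimage, Set.mem_singleton_iff] at hza hzb
    rw [← hza, ← hzb]

-- reduction commutes with polynomial evaluation
lemma red_aeval (k n : ℕ) (q : MvPolynomial (Fin n) ℤ) (x : Fin n → PadicInt p) :
    PadicInt.toZModPow k (MvPolynomial.aeval x q)
      = MvPolynomial.aeval (fun i => PadicInt.toZModPow k (x i)) q := by
  rw [MvPolynomial.map_aeval, MvPolynomial.aeval_def, MvPolynomial.coe_eval₂Hom]
  congr 1
  ext1 z
  simp

-- cylinder refinement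
lemma cylinder_anti (k r : ℕ) (z w : Fin r → PadicInt p)
    (h : red (p := p) (k+1) r w = red (p := p) (k+1) r z) :
    red (p := p) k r w = red (p := p) k r z := by
  funext j
  have := congrFun h j
  simp only [red] at this ⊢
  rw [← PadicInt.cast_toZModPow k (k+1) (Nat.le_succ k), this,
    PadicInt.cast_toZModPow k (k+1) (Nat.le_succ k)]

-- cylinder is inside a small closed ball
lemma cylinder_subset_closedBall (k r : ℕ) (z : Fin r → PadicInt p) :
    red (p := p) k r ⁻¹' {red k r z} ⊆ Metric.closedBall z ((p : ℝ) ^ (-(k : ℤ))) := by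
  intro w hw
  simp only [Set.mem_preimage, Set.mem_singleton_iff] at hw
  rw [Metric.mem_closedBall, dist_pi_le_iff (by positivity)]
  intro j
  have hj : PadicInt.toZModPow k (w j - z j) = 0 := by
    have := congrFun hw j
    simp only [red] at this
    rw [map_sub, this, sub_self]
  rw [dist_eq_norm]
  exact (mem_fiber_iff_norm k _).1 hj
end Stmt10Aux

open Stmt10Aux



theorem stmt10 (p : ℕ) [Fact p.Prime] (n m : ℕ) (hn : 1 ≤ n) (hm : 1 ≤ m)
    (φ : Fin m → MvPolynomial (Fin n) ℤ)
    -- the induced polynomial map Φ : ℤ_p^n → ℤ_p^m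
    (Φ : (Fin n → PadicInt p) → (Fin m → PadicInt p))
    (hΦ : ∀ x j, Φ x j = MvPolynomial.aeval x (φ j))
    -- the Haar probability measures on ℤ_p^n and ℤ_p^m
    (μn : Measure (Fin n → PadicInt p)) [μn.IsAddHaarMeasure] [IsProbabilityMeasure μn]
    (μm : Measure (Fin m → PadicInt p)) [μm.IsAddHaarMeasure] [IsProbabilityMeasure μm]
    -- the uniform bound on fiber counts over ℤ/p^kℤ
    (C : ℝ) (hC : 0 < C)
    (hcount : ∀ (k : ℕ), 1 ≤ k → ∀ y : Fin m → ZMod (p ^ k),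
      (Nat.card {x : Fin n → ZMod (p ^ k) //
          (fun j => MvPolynomial.aeval x (φ j)) = y} : ℝ)
        ≤ C * (p : ℝ) ^ ((k : ℤ) * ((n : ℤ) - (m : ℤ)))) :
    ∀ A : Set (Fin m → PadicInt p), MeasurableSet A →
      Measure.map Φ μn A ≤ ENNReal.ofReal C * μm A := by
  classical
  have hp : (0 : ℝ) < p := by exact_mod_cast (Fact.out : p.Prime).pos
  have hp1 : (1 : ℝ) ≤ p := by exact_mod_cast (Fact.out : p.Prime).one_lt.le
  have hppow : ∀ s : ℕ, (0 : ℝ) < ((p ^ s : ℕ) : ℝ) := fun s => by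
    exact_mod_cast pow_pos (Fact.out : p.Prime).pos s
  -- Φ is continuous, hence measurable
  have hΦcont : Continuous Φ := by
    have hfun : Φ = fun x j => MvPolynomial.aeval x (φ j) :=
      funext fun x => funext fun j => hΦ x j
    rw [hfun]
    refine continuous_pi fun j => ?_
    have : (fun x : Fin n → PadicInt p => MvPolynomial.aeval x (φ j))
        = fun x => MvPolynomial.eval x (MvPolynomial.map (Int.castRingHom (PadicInt p)) (φ j)) := by
      funext x
      rw [MvPolynomial.aeval_def, MvPolynomial.eval₂_eq_eval_map]
      rfl
    rw [this]
    exact MvPolynomial.continuous_eval _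
  have hΦmeas : Measurable Φ := hΦcont.measurable
  -- the cylinder estimate
  have hcyl : ∀ (k : ℕ) (y : Fin m → ZMod (p ^ (k + 1))),
      Measure.map Φ μn (red (p := p) (k+1) m ⁻¹' {y})
        ≤ ENNReal.ofReal C * μm (red (p := p) (k+1) m ⁻¹' {y}) := by
    intro k y
    rw [Measure.map_apply hΦmeas (measurable_fiber _ _ _)]
    have hpre : Φ ⁻¹' (red (p := p) (k+1) m ⁻¹' {y})
        = red (p := p) (k+1) n ⁻¹'
          ((fun x : Fin n → ZMod (p ^ (k+1)) => fun j => MvPolynomial.aeval x (φ j)) ⁻¹' {y}) := by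
      ext z
      simp only [Set.mem_preimage, Set.mem_singleton_iff]
      have hcomm : red (p := p) (k+1) m (Φ z)
          = fun j => MvPolynomial.aeval (red (p := p) (k+1) n z) (φ j) :=
        funext fun j => by rw [red]; rw [hΦ]; exact red_aeval (k+1) n (φ j) z
      rw [hcomm]
    rw [hpre, measure_preimage_set, measure_fiber (k+1) m μm y]
    -- numeric inequality
    have hcard := hcount (k+1) (Nat.le_add_left 1 k) y
    have hcardset : (Nat.card ((fun x : Fin n → ZMod (p ^ (k+1)) => fun j =>
          MvPolynomial.aeval x (φ j)) ⁻¹' {y}) : ℝ)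
        ≤ C * (p : ℝ) ^ (((k+1) : ℤ) * ((n : ℤ) - (m : ℤ))) := by
      exact hcard
    set a : ℕ := Nat.card ((fun x : Fin n → ZMod (p ^ (k+1)) => fun j =>
          MvPolynomial.aeval x (φ j)) ⁻¹' {y}) with ha
    have hreal : (a : ℝ) * (((p ^ ((k+1) * n) : ℕ) : ℝ))⁻¹ ≤ C * (((p ^ ((k+1) * m) : ℕ) : ℝ))⁻¹ := by
      rw [mul_inv_le_iff₀ (hppow _)]
      calc (a : ℝ) ≤ C * (p : ℝ) ^ (((k+1) : ℤ) * ((n : ℤ) - (m : ℤ))) := hcardset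
        _ = C * (((p ^ ((k+1) * m) : ℕ) : ℝ))⁻¹ * ((p ^ ((k+1) * n) : ℕ) : ℝ) := by
            rw [mul_assoc]
            congr 1
            push_cast
            rw [← zpow_natCast (p : ℝ) ((k+1) * m), ← zpow_natCast (p : ℝ) ((k+1) * n), ← zpow_neg,
              ← zpow_add₀ hp.ne']
            congr 1
            push_cast
            ring
    calc (a : ℝ≥0∞) * (((p ^ ((k+1) * n) : ℕ) : ℝ≥0∞))⁻¹
        = ENNReal.ofReal ((a : ℝ) * (((p ^ ((k+1) * n) : ℕ) : ℝ))⁻¹) := by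
          rw [ENNReal.ofReal_mul (by positivity), ENNReal.ofReal_inv_of_pos (hppow _),
            ENNReal.ofReal_natCast, ENNReal.ofReal_natCast]
      _ ≤ ENNReal.ofReal (C * (((p ^ ((k+1) * m) : ℕ) : ℝ))⁻¹) := ENNReal.ofReal_le_ofReal hreal
      _ = ENNReal.ofReal C * (((p ^ ((k+1) * m) : ℕ) : ℝ≥0∞))⁻¹ := by
          rw [ENNReal.ofReal_mul hC.le, ENNReal.ofReal_inv_of_pos (hppow _),
            ENNReal.ofReal_natCast]
  -- the open set estimate
  have hopen : ∀ U : Set (Fin m → PadicInt p), IsOpen U →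
      Measure.map Φ μn U ≤ ENNReal.ofReal C * μm U := by
    intro U hU
    set S : ℕ → Set (Fin m → PadicInt p) := fun k =>
      ⋃ y ∈ {y : Fin m → ZMod (p ^ (k+1)) | red (p := p) (k+1) m ⁻¹' {y} ⊆ U},
        red (p := p) (k+1) m ⁻¹' {y} with hS
    have hSU : ∀ k, S k ⊆ U := fun k => Set.iUnion₂_subset fun y hy => hy
    have hmono : Monotone S := by
      apply monotone_nat_of_le_succ
      intro k z hz
      simp only [hS, Set.mem_iUnion, Set.mem_setOf_eq, Set.mem_preimage,
        Set.mem_singleton_iff, exists_prop] at hz ⊢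
      obtain ⟨y, hyU, hzy⟩ := hz
      refine ⟨red (p := p) (k+2) m z, ?_, rfl⟩
      intro w hw
      simp only [Set.mem_preimage, Set.mem_singleton_iff] at hw
      apply hyU
      simp only [Set.mem_preimage, Set.mem_singleton_iff]
      rw [← hzy]
      exact cylinder_anti (k+1) m z w hw
    have hUnion : U = ⋃ k, S k := by
      apply Set.Subset.antisymm
      · intro z hz
        obtain ⟨ε, hε, hball⟩ := Metric.isOpen_iff.1 hU z hz
        obtain ⟨k, hk⟩ := exists_pow_lt_of_lt_one hε
          (by rw [inv_lt_one₀ hp]; exact_mod_cast (Fact.out : p.Prime).one_lt : (p : ℝ)⁻¹ < 1)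
        refine Set.mem_iUnion.2 ⟨k, ?_⟩
        simp only [hS, Set.mem_iUnion, Set.mem_setOf_eq, exists_prop]
        refine ⟨red (p := p) (k+1) m z, ?_, rfl⟩
        refine (cylinder_subset_closedBall (k+1) m z).trans ?_
        refine (Metric.closedBall_subset_ball ?_).trans hball
        calc (p : ℝ) ^ (-(((k:ℕ)+1 : ℕ) : ℤ)) ≤ (p : ℝ) ^ (-(k : ℤ)) := by
              apply zpow_le_zpow_right₀ hp1
              push_cast
              omega
          _ = ((p : ℝ)⁻¹) ^ k := by rw [zpow_neg, ← inv_zpow, zpow_natCast]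
          _ < ε := hk
      · exact Set.iUnion_subset hSU
    have hSk : ∀ k, Measure.map Φ μn (S k) ≤ ENNReal.ofReal C * μm (S k) := by
      intro k
      have hfin : S k = ⋃ y ∈ ({y : Fin m → ZMod (p ^ (k+1)) |
          red (p := p) (k+1) m ⁻¹' {y} ⊆ U} : Set _).toFinset,
          red (p := p) (k+1) m ⁻¹' {y} := by
        simp [hS]
      have hdisj : (↑({y : Fin m → ZMod (p ^ (k+1)) |
          red (p := p) (k+1) m ⁻¹' {y} ⊆ U} : Set _).toFinset : Set (Fin m → ZMod (p ^ (k+1)))).Pairwise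
          (Function.onFun Disjoint fun y => red (p := p) (k+1) m ⁻¹' {y}) := by
        intro x hx y hy hxy
        refine Set.disjoint_left.2 fun z hzx hzy => hxy ?_
        simp only [Set.mem_preimage, Set.mem_singleton_iff] at hzx hzy
        rw [← hzx, ← hzy]
      rw [hfin, measure_biUnion_finset hdisj (fun y _ => measurable_fiber _ _ _),
        measure_biUnion_finset hdisj (fun y _ => measurable_fiber _ _ _), Finset.mul_sum]
      exact Finset.sum_le_sum fun y _ => hcyl k y
    rw [hUnion, Monotone.measure_iUnion hmono, Monotone.measure_iUnion hmono]
    rw [ENNReal.mul_iSup]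
    exact iSup_mono hSk
  -- general measurable sets via outer regularity
  intro A hA
  refine ENNReal.le_of_forall_pos_le_add fun ε hε hfin => ?_
  have hC0 : ENNReal.ofReal C ≠ 0 := (ENNReal.ofReal_pos.2 hC).ne'
  have hεC : (ε : ℝ≥0∞) / ENNReal.ofReal C ≠ 0 := by
    simp [ENNReal.div_eq_zero_iff, hε.ne', ENNReal.ofReal_ne_top]
  obtain ⟨U, hAU, hUopen, hμU⟩ := Set.exists_isOpen_le_add A μm hεC
  calc Measure.map Φ μn A ≤ Measure.map Φ μn U := measure_mono hAU
    _ ≤ ENNReal.ofReal C * μm U := hopen U hUopen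
    _ ≤ ENNReal.ofReal C * (μm A + (ε : ℝ≥0∞) / ENNReal.ofReal C) := by
        gcongr
    _ = ENNReal.ofReal C * μm A + ENNReal.ofReal C * ((ε : ℝ≥0∞) / ENNReal.ofReal C) := mul_add _ _ _
    _ = ENNReal.ofReal C * μm A + ε := by rw [ENNReal.mul_div_cancel hC0 ENNReal.ofReal_ne_top]
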